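/- Let C_GW be the class of all finite Kripke models whose frame consists of a root x and a nonempty finite set F of worlds not containing x, where the accessibility relation R is the reflexive relation with x R y for every world y and no other pairs (a root below a finite antichain of final worlds). Then C_GW enjoys 3-IP. -/

import Mathlib

/-- Modal formulas over countably many variables. -/
inductive ModalForm : Type where
  | var : ℕ → ModalForm
  | bot : ModalForm
  | and : ModalForm → ModalForm → ModalForm
  | or : ModalForm → ModalForm → ModalForm
  | not : ModalForm → ModalForm
  | imp : ModalForm → ModalForm → ModalForm
  | box : ModalForm → ModalForm

namespace ModalForm

mutual
  /-- positively occurring variables -/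
  def vpos : ModalForm → Finset ℕ
    | var p => {p}
    | bot => ∅
    | and φ ψ => vpos φ ∪ vpos ψ
    | or φ ψ => vpos φ ∪ vpos ψ
    | not φ => vneg φ
    | imp φ ψ => vneg φ ∪ vpos ψ
    | box φ => vpos φ
  /-- negatively occurring variables -/
  def vneg : ModalForm → Finset ℕ
    | var _ => ∅
    | bot => ∅
    | and φ ψ => vneg φ ∪ vneg ψ
    | or φ ψ => vneg φ ∪ vneg ψ
    | not φ => vpos φ
    | imp φ ψ => vpos φ ∪ vneg ψ
    | box φ => vneg φ
end

/-- Modal depth: maximal nesting of `□`. -/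
def depth : ModalForm → ℕ
  | var _ => 0
  | bot => 0
  | and φ ψ => max (depth φ) (depth ψ)
  | or φ ψ => max (depth φ) (depth ψ)
  | not φ => depth φ
  | imp φ ψ => max (depth φ) (depth ψ)
  | box φ => depth φ + 1

/-- `◇φ := ¬□¬φ` -/
def dia (φ : ModalForm) : ModalForm := not (box (not φ))

/-- `⊤ := ¬⊥` -/
def top : ModalForm := not bot

end ModalForm

/-- An S4 Kripke frame: nonempty set of worlds with a reflexive transitive relation. -/
structure KFrame : Type 1 where
  W : Type
  R : W → W → Prop
  nonempty : Nonempty W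
  refl : ∀ x, R x x
  trans : ∀ x y z, R x y → R y z → R x z

/-- A Kripke model: a frame with a valuation. -/
structure KModel : Type 1 extends KFrame where
  val : W → ℕ → Prop

/-- The model based on frame `F` with valuation `V`. -/
def KFrame.toModel (F : KFrame) (V : F.W → ℕ → Prop) : KModel :=
  { toKFrame := F, val := V }

/-- Satisfaction in a Kripke model. -/
def KModel.Sat (M : KModel) : M.W → ModalForm → Prop
  | w, .var p => M.val w p
  | _, .bot => False
  | w, .and φ ψ => M.Sat w φ ∧ M.Sat w ψ
  | w, .or φ ψ => M.Sat w φ ∨ M.Sat w ψ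
  | w, .not φ => ¬ M.Sat w φ
  | w, .imp φ ψ => M.Sat w φ → M.Sat w ψ
  | w, .box φ => ∀ y, M.R w y → M.Sat y φ

/-- `(M0,w0) →ₙ^{(P⁺,P⁻)} (M1,w1)`: every `(P⁺,P⁻)`-formula of depth ≤ n
satisfied at `(M0,w0)` is satisfied at `(M1,w1)`. -/
def ModalArrow (Pp Pm : Finset ℕ) (n : ℕ) (M0 : KModel) (w0 : M0.W)
    (M1 : KModel) (w1 : M1.W) : Prop :=
  ∀ φ : ModalForm, φ.vpos ⊆ Pp → φ.vneg ⊆ Pm → φ.depth ≤ n →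
    M0.Sat w0 φ → M1.Sat w1 φ

/-- p-morphism between frames. -/
def PMorphism (F G : KFrame) (f : F.W → G.W) : Prop :=
  (∀ x y, F.R x y → G.R (f x) (f y)) ∧
  (∀ x w, G.R (f x) w → ∃ z, F.R x z ∧ f z = w)

/-- The class `C` of Kripke models enjoys `n`-IP. -/
def EnjoysIP (C : Set KModel) (n : ℕ) : Prop :=
  ∀ (Pp Pm : Finset ℕ) (M0 M1 : KModel), M0 ∈ C → M1 ∈ C →
    ∀ (w0 : M0.W) (w1 : M1.W), ModalArrow Pp Pm n M0 w0 M1 w1 →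
      ∃ (F : KFrame) (wstar : F.W) (f0 : F.W → M0.W) (f1 : F.W → M1.W),
        (∀ V : F.W → ℕ → Prop, F.toModel V ∈ C) ∧
        PMorphism F M0.toKFrame f0 ∧
        PMorphism F M1.toKFrame f1 ∧
        f0 wstar = w0 ∧ f1 wstar = w1 ∧
        ∀ x : F.W, ModalArrow Pp Pm 0 M0 (f0 x) M1 (f1 x)

/-- A world is final iff every successor is also a predecessor. -/
def KModel.Final (M : KModel) (w : M.W) : Prop := ∀ y, M.R w y → M.R y w

/-- The cluster of a world. -/
def KModel.cluster (M : KModel) (w : M.W) : Set M.W := {u | M.R w u ∧ M.R u w}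

/-- Cluster `C0` of `M0` matches cluster `C1` of `M1`. -/
def Matches (Pp Pm : Finset ℕ) (M0 M1 : KModel) (C0 : Set M0.W) (C1 : Set M1.W) : Prop :=
  (∀ u0 ∈ C0, ∃ u1 ∈ C1, ModalArrow Pp Pm 0 M0 u0 M1 u1) ∧
  (∀ u1 ∈ C1, ∃ u0 ∈ C0, ModalArrow Pp Pm 0 M0 u0 M1 u1)

/-- `φ` is satisfied at every world of every model in `C`. -/
def ValidOn (C : Set KModel) (φ : ModalForm) : Prop :=
  ∀ M ∈ C, ∀ w : M.W, M.Sat w φ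

/-- The class of GW models: a root `x` below a finite antichain `F` of final worlds. -/
def C_GW : Set KModel :=
  {M | Finite M.W ∧ ∃ (x : M.W) (F : Set M.W), x ∉ F ∧ F.Nonempty ∧
    (∀ w : M.W, w = x ∨ w ∈ F) ∧
    ∀ u v : M.W, M.R u v ↔ (u = v ∨ u = x)}

namespace IPAux
open ModalForm

/-! ### Finite conjunctions and disjunctions -/

def conjList : List ModalForm → ModalForm
  | [] => .not .bot
  | φ :: l => .and φ (conjList l)

def disjList : List ModalForm → ModalForm
  | [] => .bot
  | φ :: l => .or φ (disjList l)

lemma conjList_sat (M : KModel) (w : M.W) : ∀ l : List ModalForm,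
    M.Sat w (conjList l) ↔ ∀ φ ∈ l, M.Sat w φ
  | [] => by simp [conjList, KModel.Sat]
  | φ :: l => by simp [conjList, KModel.Sat, conjList_sat M w l]

lemma disjList_sat (M : KModel) (w : M.W) : ∀ l : List ModalForm,
    M.Sat w (disjList l) ↔ ∃ φ ∈ l, M.Sat w φ
  | [] => by simp [disjList, KModel.Sat]
  | φ :: l => by simp [disjList, KModel.Sat, disjList_sat M w l]

lemma conjList_vpos (S : Finset ℕ) : ∀ l : List ModalForm,
    (∀ φ ∈ l, φ.vpos ⊆ S) → (conjList l).vpos ⊆ S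
  | [] => by simp [conjList, vpos, vneg]
  | φ :: l => by
      intro h
      simp only [conjList, vpos, Finset.union_subset_iff]
      exact ⟨h φ (by simp), conjList_vpos S l fun ψ hψ => h ψ (by simp [hψ])⟩

lemma conjList_vneg (S : Finset ℕ) : ∀ l : List ModalForm,
    (∀ φ ∈ l, φ.vneg ⊆ S) → (conjList l).vneg ⊆ S
  | [] => by simp [conjList, vpos, vneg]
  | φ :: l => by
      intro h
      simp only [conjList, vneg, Finset.union_subset_iff]
      exact ⟨h φ (by simp), conjList_vneg S l fun ψ hψ => h ψ (by simp [hψ])⟩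

lemma disjList_vpos (S : Finset ℕ) : ∀ l : List ModalForm,
    (∀ φ ∈ l, φ.vpos ⊆ S) → (disjList l).vpos ⊆ S
  | [] => by simp [disjList, vpos]
  | φ :: l => by
      intro h
      simp only [disjList, vpos, Finset.union_subset_iff]
      exact ⟨h φ (by simp), disjList_vpos S l fun ψ hψ => h ψ (by simp [hψ])⟩

lemma disjList_vneg (S : Finset ℕ) : ∀ l : List ModalForm,
    (∀ φ ∈ l, φ.vneg ⊆ S) → (disjList l).vneg ⊆ S
  | [] => by simp [disjList, vneg]
  | φ :: l => by
      intro h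
      simp only [disjList, vneg, Finset.union_subset_iff]
      exact ⟨h φ (by simp), disjList_vneg S l fun ψ hψ => h ψ (by simp [hψ])⟩

lemma conjList_depth : ∀ l : List ModalForm,
    (∀ φ ∈ l, φ.depth ≤ 0) → (conjList l).depth ≤ 0
  | [] => by simp [conjList, depth]
  | φ :: l => by
      intro h
      simp only [conjList, depth, max_le_iff]
      exact ⟨h φ (by simp), conjList_depth l fun ψ hψ => h ψ (by simp [hψ])⟩

lemma disjList_depth : ∀ l : List ModalForm,
    (∀ φ ∈ l, φ.depth ≤ 1) → (disjList l).depth ≤ 1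
  | [] => by simp [disjList, depth]
  | φ :: l => by
      intro h
      simp only [disjList, depth, max_le_iff]
      exact ⟨h φ (by simp), disjList_depth l fun ψ hψ => h ψ (by simp [hψ])⟩

/-! ### Monotonicity for depth-0 formulas -/

lemma sat_mono (M N : KModel) (u : M.W) (v : N.W) (Pp Pm : Finset ℕ)
    (hp : ∀ p ∈ Pp, M.val u p → N.val v p) (hm : ∀ p ∈ Pm, N.val v p → M.val u p) :
    ∀ φ : ModalForm, φ.depth ≤ 0 →
      ((φ.vpos ⊆ Pp → φ.vneg ⊆ Pm → M.Sat u φ → N.Sat v φ) ∧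
       (φ.vpos ⊆ Pm → φ.vneg ⊆ Pp → N.Sat v φ → M.Sat u φ)) := by
  intro φ
  induction φ with
  | var p =>
      intro _
      simp only [vpos, vneg, KModel.Sat, Finset.singleton_subset_iff]
      exact ⟨fun h1 _ => hp p h1, fun h1 _ => hm p h1⟩
  | bot => intro _; simp [KModel.Sat]
  | and φ ψ ihφ ihψ =>
      intro hd
      simp only [depth, max_le_iff] at hd
      simp only [vpos, vneg, KModel.Sat, Finset.union_subset_iff]
      constructor
      · rintro ⟨h1, h2⟩ ⟨h3, h4⟩ ⟨h5, h6⟩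
        exact ⟨(ihφ hd.1).1 h1 h3 h5, (ihψ hd.2).1 h2 h4 h6⟩
      · rintro ⟨h1, h2⟩ ⟨h3, h4⟩ ⟨h5, h6⟩
        exact ⟨(ihφ hd.1).2 h1 h3 h5, (ihψ hd.2).2 h2 h4 h6⟩
  | or φ ψ ihφ ihψ =>
      intro hd
      simp only [depth, max_le_iff] at hd
      simp only [vpos, vneg, KModel.Sat, Finset.union_subset_iff]
      constructor
      · rintro ⟨h1, h2⟩ ⟨h3, h4⟩ (h5 | h5)
        · exact Or.inl ((ihφ hd.1).1 h1 h3 h5)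
        · exact Or.inr ((ihψ hd.2).1 h2 h4 h5)
      · rintro ⟨h1, h2⟩ ⟨h3, h4⟩ (h5 | h5)
        · exact Or.inl ((ihφ hd.1).2 h1 h3 h5)
        · exact Or.inr ((ihψ hd.2).2 h2 h4 h5)
  | not φ ihφ =>
      intro hd
      simp only [depth] at hd
      simp only [vpos, vneg, KModel.Sat]
      constructor
      · intro h1 h2 h5 h6
        exact h5 ((ihφ hd).2 h2 h1 h6)
      · intro h1 h2 h5 h6
        exact h5 ((ihφ hd).1 h2 h1 h6)
  | imp φ ψ ihφ ihψ =>
      intro hd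
      simp only [depth, max_le_iff] at hd
      simp only [vpos, vneg, KModel.Sat, Finset.union_subset_iff]
      constructor
      · rintro ⟨h1, h2⟩ ⟨h3, h4⟩ h5 h6
        exact (ihψ hd.2).1 h2 h4 (h5 ((ihφ hd.1).2 h3 h1 h6))
      · rintro ⟨h1, h2⟩ ⟨h3, h4⟩ h5 h6
        exact (ihψ hd.2).2 h2 h4 (h5 ((ihφ hd.1).1 h3 h1 h6))
  | box φ ihφ =>
      intro hd
      simp [depth] at hd

/-! ### Characteristic depth-0 formulas -/

open Classical in
noncomputable def chi (Pp Pm : Finset ℕ) (M : KModel) (u : M.W) : ModalForm :=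
  .and
    (conjList (Pp.toList.map fun p => if M.val u p then .var p else .not .bot))
    (conjList (Pm.toList.map fun p => if M.val u p then .not .bot else .not (.var p)))

lemma chi_vpos (Pp Pm : Finset ℕ) (M : KModel) (u : M.W) :
    (chi Pp Pm M u).vpos ⊆ Pp := by
  simp only [chi, vpos, Finset.union_subset_iff]
  constructor
  · apply conjList_vpos
    intro φ hφ
    simp only [List.mem_map] at hφ
    obtain ⟨p, hp, rfl⟩ := hφ
    split
    · simpa [vpos] using Finset.mem_toList.mp hp
    · simp [vpos, vneg]
  · apply conjList_vpos
    intro φ hφ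
    simp only [List.mem_map] at hφ
    obtain ⟨p, hp, rfl⟩ := hφ
    split <;> simp [vpos, vneg]

lemma chi_vneg (Pp Pm : Finset ℕ) (M : KModel) (u : M.W) :
    (chi Pp Pm M u).vneg ⊆ Pm := by
  simp only [chi, vneg, Finset.union_subset_iff]
  constructor
  · apply conjList_vneg
    intro φ hφ
    simp only [List.mem_map] at hφ
    obtain ⟨p, hp, rfl⟩ := hφ
    split <;> simp [vpos, vneg]
  · apply conjList_vneg
    intro φ hφ
    simp only [List.mem_map] at hφ
    obtain ⟨p, hp, rfl⟩ := hφ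
    split
    · simp [vpos, vneg]
    · simpa [vpos, vneg] using Finset.mem_toList.mp hp

lemma chi_depth (Pp Pm : Finset ℕ) (M : KModel) (u : M.W) :
    (chi Pp Pm M u).depth = 0 := by
  apply Nat.le_zero.mp
  simp only [chi, depth, max_le_iff]
  constructor
  · apply conjList_depth
    intro φ hφ
    simp only [List.mem_map] at hφ
    obtain ⟨p, hp, rfl⟩ := hφ
    split <;> simp [depth]
  · apply conjList_depth
    intro φ hφ
    simp only [List.mem_map] at hφ
    obtain ⟨p, hp, rfl⟩ := hφ
    split <;> simp [depth]

lemma chi_sat_self (Pp Pm : Finset ℕ) (M : KModel) (u : M.W) :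
    M.Sat u (chi Pp Pm M u) := by
  simp only [chi, KModel.Sat]
  constructor
  · rw [conjList_sat]
    intro φ hφ
    simp only [List.mem_map] at hφ
    obtain ⟨p, hp, rfl⟩ := hφ
    split
    · next h => exact h
    · simp [KModel.Sat]
  · rw [conjList_sat]
    intro φ hφ
    simp only [List.mem_map] at hφ
    obtain ⟨p, hp, rfl⟩ := hφ
    split
    · simp [KModel.Sat]
    · next h => simpa [KModel.Sat] using h

lemma chi_sat_arrow (Pp Pm : Finset ℕ) (M N : KModel) (u : M.W) (v : N.W)
    (h : N.Sat v (chi Pp Pm M u)) : ModalArrow Pp Pm 0 M u N v := by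
  simp only [chi, KModel.Sat] at h
  obtain ⟨h1, h2⟩ := h
  rw [conjList_sat] at h1 h2
  have hp : ∀ p ∈ Pp, M.val u p → N.val v p := by
    intro p hp hval
    have := h1 _ (List.mem_map.mpr ⟨p, Finset.mem_toList.mpr hp, rfl⟩)
    rw [if_pos hval] at this
    exact this
  have hm : ∀ p ∈ Pm, N.val v p → M.val u p := by
    intro p hp hval
    by_contra hnval
    have := h2 _ (List.mem_map.mpr ⟨p, Finset.mem_toList.mpr hp, rfl⟩)
    rw [if_neg hnval] at this
    exact this hval
  intro φ hφp hφm hd hsat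
  exact (sat_mono M N u v Pp Pm hp hm φ hd).1 hφp hφm hsat

attribute [irreducible] chi

lemma arrow_mono {Pp Pm : Finset ℕ} {n m : ℕ} {M0 M1 : KModel} {w0 : M0.W} {w1 : M1.W}
    (h : ModalArrow Pp Pm n M0 w0 M1 w1) (hmn : m ≤ n) : ModalArrow Pp Pm m M0 w0 M1 w1 :=
  fun φ hp hm hd => h φ hp hm (hd.trans hmn)

end IPAux
namespace IPAux

/-! ### The generic GW frame on `Option A` -/

def gwFrame (A : Type) : KFrame where
  W := Option A
  R u v := u = v ∨ u = none
  nonempty := ⟨none⟩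
  refl _ := Or.inl rfl
  trans := by rintro x y z (rfl | rfl) (h | h) <;> simp_all

lemma gwFrame_mem (A : Type) [Finite A] [Nonempty A] (V : Option A → ℕ → Prop) :
    (gwFrame A).toModel V ∈ C_GW := by
  refine ⟨?_, none, Set.range some, by rintro ⟨a, ha⟩; exact Option.some_ne_none a ha, ?_, ?_, ?_⟩
  · have := Fintype.ofFinite A
    show Finite (Option A)
    infer_instance
  · exact ⟨some (Classical.arbitrary A), Set.mem_range_self _⟩
  · intro w
    cases w with
    | none => exact Or.inl rfl
    | some a => exact Or.inr (Set.mem_range_self a)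
  · intro u v; exact Iff.rfl

/-! ### Matching claims -/

section Claims

variable (Pp Pm : Finset ℕ) (M0 M1 : KModel) (x0 : M0.W) (F0 : Set M0.W)
  (x1 : M1.W) (F1 : Set M1.W)

/-- If `x0 →₃ x1` then every final world of `M0` has a match in `F1`. -/
lemma claim2
    (hx0 : x0 ∉ F0) (hR0 : ∀ u v, M0.R u v ↔ (u = v ∨ u = x0))
    (hx1 : x1 ∉ F1) (hne1 : F1.Nonempty) (hcov1 : ∀ w : M1.W, w = x1 ∨ w ∈ F1)
    (hR1 : ∀ u v, M1.R u v ↔ (u = v ∨ u = x1))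
    (h : ModalArrow Pp Pm 3 M0 x0 M1 x1) :
    ∀ u0 ∈ F0, ∃ u1 ∈ F1, ModalArrow Pp Pm 0 M0 u0 M1 u1 := by
  intro u0 hu0
  set χ := chi Pp Pm M0 u0 with hχ
  set φ : ModalForm := .not (.box (.not (.box χ))) with hφ
  have hφp : φ.vpos ⊆ Pp := by
    simp only [hφ, ModalForm.vpos, ModalForm.vneg]
    exact chi_vpos Pp Pm M0 u0
  have hφm : φ.vneg ⊆ Pm := by
    simp only [hφ, ModalForm.vpos, ModalForm.vneg]
    exact chi_vneg Pp Pm M0 u0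
  have hφd : φ.depth ≤ 3 := by
    rw [hφ, hχ]
    simp [ModalForm.depth, chi_depth]
  have hsat0 : M0.Sat x0 φ := by
    simp only [hφ, KModel.Sat]
    intro hall
    apply hall u0 ((hR0 x0 u0).mpr (Or.inr rfl))
    intro z hz
    rcases (hR0 u0 z).mp hz with rfl | h'
    · exact chi_sat_self Pp Pm M0 u0
    · exact absurd h' (fun h'' => hx0 (h'' ▸ hu0))
  have hsat1 := h φ hφp hφm hφd hsat0
  simp only [hφ, KModel.Sat] at hsat1
  push_neg at hsat1
  obtain ⟨y, hy, hbox⟩ := hsat1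
  rcases hcov1 y with rfl | hyF
  · obtain ⟨u1, hu1⟩ := hne1
    exact ⟨u1, hu1, chi_sat_arrow _ _ _ _ _ _ (hbox u1 ((hR1 y u1).mpr (Or.inr rfl)))⟩
  · exact ⟨y, hyF, chi_sat_arrow _ _ _ _ _ _ (hbox y (M1.refl y))⟩

/-- If `x0 →₃ x1` then every final world of `M1` has a match in `F0`. -/
lemma claim3 [Fintype M0.W]
    (hx0 : x0 ∉ F0) (hne0 : F0.Nonempty) (hcov0 : ∀ w : M0.W, w = x0 ∨ w ∈ F0)
    (hR0 : ∀ u v, M0.R u v ↔ (u = v ∨ u = x0))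
    (hx1 : x1 ∉ F1)
    (hR1 : ∀ u v, M1.R u v ↔ (u = v ∨ u = x1))
    (h : ModalArrow Pp Pm 3 M0 x0 M1 x1) :
    ∀ u1 ∈ F1, ∃ u0 ∈ F0, ModalArrow Pp Pm 0 M0 u0 M1 u1 := by
  classical
  intro u1 hu1
  set L : List ModalForm := (Finset.univ : Finset M0.W).toList.map
    (fun w => if w ∈ F0 then .box (chi Pp Pm M0 w) else .bot) with hL
  set φ : ModalForm := .box (.not (.box (.not (disjList L)))) with hφ
  have hmemL : ∀ ψ ∈ L, ∃ w ∈ F0, ψ = .box (chi Pp Pm M0 w) ∨ ψ = .bot := by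
    intro ψ hψ
    simp only [hL, List.mem_map] at hψ
    obtain ⟨w, hw, rfl⟩ := hψ
    by_cases hwF : w ∈ F0
    · exact ⟨w, hwF, Or.inl (if_pos hwF)⟩
    · obtain ⟨w', hw'⟩ := hne0
      exact ⟨w', hw', Or.inr (if_neg hwF)⟩
  have hφp : φ.vpos ⊆ Pp := by
    simp only [hφ, ModalForm.vpos, ModalForm.vneg]
    apply disjList_vpos
    intro ψ hψ
    obtain ⟨w, _, (rfl | rfl)⟩ := hmemL ψ hψ
    · simpa [ModalForm.vpos] using chi_vpos Pp Pm M0 w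
    · simp [ModalForm.vpos]
  have hφm : φ.vneg ⊆ Pm := by
    simp only [hφ, ModalForm.vpos, ModalForm.vneg]
    apply disjList_vneg
    intro ψ hψ
    obtain ⟨w, _, (rfl | rfl)⟩ := hmemL ψ hψ
    · simpa [ModalForm.vneg] using chi_vneg Pp Pm M0 w
    · simp [ModalForm.vneg]
  have hφd : φ.depth ≤ 3 := by
    have hLd : (disjList L).depth ≤ 1 := by
      apply disjList_depth
      intro ψ hψ
      obtain ⟨w, _, (rfl | rfl)⟩ := hmemL ψ hψ
      · simp [ModalForm.depth, chi_depth]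
      · simp [ModalForm.depth]
    rw [hφ]
    simp only [ModalForm.depth]
    omega
  -- some final world satisfies `□χ(w)` for itself
  have hboxself : ∀ w ∈ F0, M0.Sat w (disjList L) := by
    intro w hwF
    rw [disjList_sat]
    refine ⟨_, List.mem_map.mpr ⟨w, Finset.mem_toList.mpr (Finset.mem_univ w), rfl⟩, ?_⟩
    rw [if_pos hwF]
    simp only [KModel.Sat]
    intro z hz
    rcases (hR0 w z).mp hz with rfl | h'
    · exact chi_sat_self Pp Pm M0 w
    · exact absurd h' (fun h'' => hx0 (h'' ▸ hwF))
  have hsat0 : M0.Sat x0 φ := by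
    simp only [hφ, KModel.Sat]
    intro y hy hall
    rcases hcov0 y with rfl | hyF
    · obtain ⟨w, hwF⟩ := hne0
      exact hall w ((hR0 y w).mpr (Or.inr rfl)) (hboxself w hwF)
    · exact hall y (M0.refl y) (hboxself y hyF)
  have hsat1 := h φ hφp hφm hφd hsat0
  simp only [hφ, KModel.Sat] at hsat1
  have hu1' := hsat1 u1 ((hR1 x1 u1).mpr (Or.inr rfl))
  push_neg at hu1'
  obtain ⟨z, hz, hzsat⟩ := hu1'
  have hz' : z = u1 := by
    rcases (hR1 u1 z).mp hz with rfl | h'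
    · rfl
    · exact absurd h' (fun h'' => hx1 (h'' ▸ hu1))
  subst hz'
  rw [disjList_sat] at hzsat
  obtain ⟨ψ, hψL, hψsat⟩ := hzsat
  simp only [hL, List.mem_map] at hψL
  obtain ⟨w, _, rfl⟩ := hψL
  by_cases hwF : w ∈ F0
  · rw [if_pos hwF] at hψsat
    simp only [KModel.Sat] at hψsat
    exact ⟨w, hwF, chi_sat_arrow _ _ _ _ _ _ (hψsat z (M1.refl z))⟩
  · rw [if_neg hwF] at hψsat
    exact absurd hψsat (by simp [KModel.Sat])

/-- If `x0 →₃ u1` with `u1` final, then every world of `M0` matches `u1`. -/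
lemma case2lem
    (hR0 : ∀ u v, M0.R u v ↔ (u = v ∨ u = x0))
    (hx1 : x1 ∉ F1)
    (hR1 : ∀ u v, M1.R u v ↔ (u = v ∨ u = x1))
    (u1 : M1.W) (hu1 : u1 ∈ F1)
    (h : ModalArrow Pp Pm 3 M0 x0 M1 u1) :
    ∀ y : M0.W, ModalArrow Pp Pm 0 M0 y M1 u1 := by
  intro y
  set χ := chi Pp Pm M0 y with hχ
  set φ : ModalForm := .not (.box (.not χ)) with hφ
  have hsat0 : M0.Sat x0 φ := by
    simp only [hφ, KModel.Sat]
    intro hall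
    exact hall y ((hR0 x0 y).mpr (Or.inr rfl)) (chi_sat_self Pp Pm M0 y)
  have hsat1 := h φ
    (by simp only [hφ, ModalForm.vpos, ModalForm.vneg]; exact chi_vpos _ _ _ _)
    (by simp only [hφ, ModalForm.vpos, ModalForm.vneg]; exact chi_vneg _ _ _ _)
    (by rw [hφ, hχ]; simp [ModalForm.depth, chi_depth])
    hsat0
  simp only [hφ, KModel.Sat] at hsat1
  push_neg at hsat1
  obtain ⟨z, hz, hzsat⟩ := hsat1
  have hz' : z = u1 := by
    rcases (hR1 u1 z).mp hz with rfl | h'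
    · rfl
    · exact absurd h' (fun h'' => hx1 (h'' ▸ hu1))
  subst hz'
  exact chi_sat_arrow _ _ _ _ _ _ hzsat

/-- If `u0 →₃ x1` with `u0` final, then `u0` matches every world of `M1`. -/
lemma case3lem
    (hx0 : x0 ∉ F0)
    (hR0 : ∀ u v, M0.R u v ↔ (u = v ∨ u = x0))
    (hR1 : ∀ u v, M1.R u v ↔ (u = v ∨ u = x1))
    (u0 : M0.W) (hu0 : u0 ∈ F0)
    (h : ModalArrow Pp Pm 3 M0 u0 M1 x1) :
    ∀ y : M1.W, ModalArrow Pp Pm 0 M0 u0 M1 y := by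
  intro y
  set χ := chi Pp Pm M0 u0 with hχ
  set φ : ModalForm := .box χ with hφ
  have hsat0 : M0.Sat u0 φ := by
    simp only [hφ, KModel.Sat]
    intro z hz
    rcases (hR0 u0 z).mp hz with rfl | h'
    · exact chi_sat_self Pp Pm M0 u0
    · exact absurd h' (fun h'' => hx0 (h'' ▸ hu0))
  have hsat1 := h φ
    (by simp only [hφ, ModalForm.vpos]; exact chi_vpos _ _ _ _)
    (by simp only [hφ, ModalForm.vneg]; exact chi_vneg _ _ _ _)
    (by rw [hφ, hχ]; simp [ModalForm.depth, chi_depth])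
    hsat0
  simp only [hφ, KModel.Sat] at hsat1
  exact chi_sat_arrow _ _ _ _ _ _ (hsat1 y ((hR1 x1 y).mpr (Or.inr rfl)))

end Claims

end IPAux

theorem stmt15 : EnjoysIP C_GW 3 := by
  classical
  intro Pp Pm M0 M1 hM0 hM1 w0 w1 h
  obtain ⟨hfin0, x0, F0, hx0, hne0, hcov0, hR0⟩ := hM0
  obtain ⟨hfin1, x1, F1, hx1, hne1, hcov1, hR1⟩ := hM1
  haveI := hfin0
  haveI := hfin1
  -- a p-morphism from any GW-like frame constantly into a final world
  rcases hcov0 w0 with rfl | hw0F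
  · rcases hcov1 w1 with rfl | hw1F
    · -- CASE 1 : both roots
      have hc2 := IPAux.claim2 Pp Pm M0 M1 w0 F0 w1 F1 hx0 hR0 hx1 hne1 hcov1 hR1 h
      haveI : Fintype M0.W := Fintype.ofFinite _
      have hc3 := IPAux.claim3 Pp Pm M0 M1 w0 F0 w1 F1 hx0 hne0 hcov0 hR0 hx1 hR1 h
      set A := {q : M0.W × M1.W // q.1 ∈ F0 ∧ q.2 ∈ F1 ∧ ModalArrow Pp Pm 0 M0 q.1 M1 q.2}
        with hA
      haveI : Nonempty A := by
        obtain ⟨u0, hu0⟩ := hne0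
        obtain ⟨u1, hu1, harr⟩ := hc2 u0 hu0
        exact ⟨⟨(u0, u1), hu0, hu1, harr⟩⟩
      haveI : Finite A := Subtype.finite
      refine ⟨IPAux.gwFrame A, none,
        (fun o => o.elim w0 (fun a => a.1.1)),
        (fun o => o.elim w1 (fun a => a.1.2)),
        IPAux.gwFrame_mem A, ⟨?_, ?_⟩, ⟨?_, ?_⟩, rfl, rfl, ?_⟩
      · rintro x y (rfl | rfl)
        · exact M0.refl _
        · exact (hR0 _ _).mpr (Or.inr rfl)
      · intro x w hw
        cases x with
        | none =>
            rcases hcov0 w with rfl | hwF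
            · exact ⟨none, Or.inr rfl, rfl⟩
            · obtain ⟨u1, hu1, harr⟩ := hc2 w hwF
              exact ⟨some ⟨(w, u1), hwF, hu1, harr⟩, Or.inr rfl, rfl⟩
        | some a =>
            rcases (hR0 _ _).mp hw with rfl | hax
            · exact ⟨some a, Or.inl rfl, rfl⟩
            · exact absurd (hax ▸ a.2.1) hx0
      · rintro x y (rfl | rfl)
        · exact M1.refl _
        · exact (hR1 _ _).mpr (Or.inr rfl)
      · intro x w hw
        cases x with
        | none =>
            rcases hcov1 w with rfl | hwF
            · exact ⟨none, Or.inr rfl, rfl⟩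
            · obtain ⟨u0, hu0, harr⟩ := hc3 w hwF
              exact ⟨some ⟨(u0, w), hu0, hwF, harr⟩, Or.inr rfl, rfl⟩
        | some a =>
            rcases (hR1 _ _).mp hw with rfl | hax
            · exact ⟨some a, Or.inl rfl, rfl⟩
            · exact absurd (hax ▸ a.2.2.1) hx1
      · intro x
        cases x with
        | none => exact IPAux.arrow_mono h (by norm_num)
        | some a => exact a.2.2.2
    · -- CASE 2 : w0 is the root of M0, w1 is final in M1
      have hall := IPAux.case2lem Pp Pm M0 M1 w0 x1 F1 hR0 hx1 hR1 w1 hw1F h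
      refine ⟨M0.toKFrame, w0, id, (fun _ => w1), ?_, ?_, ?_, rfl, rfl, ?_⟩
      · intro V; exact ⟨hfin0, w0, F0, hx0, hne0, hcov0, hR0⟩
      · exact ⟨fun x y hxy => hxy, fun x w hw => ⟨w, hw, rfl⟩⟩
      · refine ⟨fun _ _ _ => M1.refl w1, fun x w hw => ?_⟩
        rcases (hR1 _ _).mp hw with rfl | hax
        · exact ⟨x, M0.refl x, rfl⟩
        · exact absurd (hax ▸ hw1F) hx1
      · exact hall
  · rcases hcov1 w1 with rfl | hw1F
    · -- CASE 3 : w0 is final in M0, w1 is the root of M1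
      have hall := IPAux.case3lem Pp Pm M0 M1 x0 F0 w1 hx0 hR0 hR1 w0 hw0F h
      refine ⟨M1.toKFrame, w1, (fun _ => w0), id, ?_, ?_, ?_, rfl, rfl, ?_⟩
      · intro V; exact ⟨hfin1, w1, F1, hx1, hne1, hcov1, hR1⟩
      · refine ⟨fun _ _ _ => M0.refl w0, fun x w hw => ?_⟩
        rcases (hR0 _ _).mp hw with rfl | hax
        · exact ⟨x, M1.refl x, rfl⟩
        · exact absurd (hax ▸ hw0F) hx0
      · exact ⟨fun x y hxy => hxy, fun x w hw => ⟨w, hw, rfl⟩⟩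
      · exact hall
    · -- CASE 4 : both final
      refine ⟨IPAux.gwFrame Unit, none, (fun _ => w0), (fun _ => w1),
        IPAux.gwFrame_mem Unit, ?_, ?_, rfl, rfl, ?_⟩
      · refine ⟨fun _ _ _ => M0.refl w0, fun x w hw => ?_⟩
        rcases (hR0 _ _).mp hw with rfl | hax
        · exact ⟨x, (IPAux.gwFrame Unit).refl x, rfl⟩
        · exact absurd (hax ▸ hw0F) hx0
      · refine ⟨fun _ _ _ => M1.refl w1, fun x w hw => ?_⟩
        rcases (hR1 _ _).mp hw with rfl | hax
        · exact ⟨x, (IPAux.gwFrame Unit).refl x, rfl⟩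
        · exact absurd (hax ▸ hw1F) hx1
      · intro _; exact IPAux.arrow_mono h (by norm_num)
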